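/- For every natural number n: ∑_{k=0}^{n} C(n,k)^2 · 4^k = ∑_{k=0}^{⌊n/2⌋} C(n,2k) · C(2k,k) · 4^k · 5^(n−2k). -/

import Mathlib

open Finset

lemma vander (n k : ℕ) (h : k ≤ n) :
    ∑ j ∈ range (n + 1), k.choose j * (n - k).choose j = n.choose k := by
  have step1 : ∑ j ∈ range (n + 1), k.choose j * (n - k).choose j
      = ∑ j ∈ range (k + 1), k.choose j * (n - k).choose j := by
    symm
    apply Finset.sum_subset
    · intro x hx; simp only [mem_range] at *; omega
    · intro x hx hnx
      simp only [mem_range] at hx hnx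
      rw [Nat.choose_eq_zero_of_lt (by omega), zero_mul]
  have hV := Nat.add_choose_eq k (n - k) k
  rw [Nat.add_sub_cancel' h] at hV
  rw [step1, hV,
    Finset.Nat.sum_antidiagonal_eq_sum_range_succ (fun a b => k.choose a * (n - k).choose b) k]
  rw [← Finset.sum_range_reflect (fun i => k.choose i * (n - k).choose (k - i)) (k + 1)]
  apply Finset.sum_congr rfl
  intro i hi
  simp only [mem_range] at hi
  have h1 : k + 1 - 1 - i = k - i := by omega
  have h2 : k - (k - i) = i := by omega
  rw [h1, h2, Nat.choose_symm (by omega)]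

lemma key (n j : ℕ) :
    ∑ k ∈ range (n + 1), n.choose k * (k.choose j * (n - k).choose j) * 4 ^ k
      = n.choose (2 * j) * (2 * j).choose j * 4 ^ j * 5 ^ (n - 2 * j) := by
  by_cases hj : 2 * j ≤ n
  · -- restrict to k ≥ j and shift
    have step1 : ∑ k ∈ range (n + 1), n.choose k * (k.choose j * (n - k).choose j) * 4 ^ k
        = ∑ k ∈ Ico j (n + 1), n.choose k * (k.choose j * (n - k).choose j) * 4 ^ k := by
      symm
      apply Finset.sum_subset
      · intro x hx; simp only [mem_Ico, mem_range] at *; omega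
      · intro x hx hnx
        simp only [mem_range, mem_Ico] at hx hnx
        rw [Nat.choose_eq_zero_of_lt (show x < j by omega)]
        ring
    rw [step1, Finset.sum_Ico_eq_sum_range]
    have step2 : ∀ m ∈ range (n + 1 - j),
        n.choose (j + m) * ((j + m).choose j * (n - (j + m)).choose j) * 4 ^ (j + m)
          = n.choose j * (n - j).choose j * 4 ^ j * ((n - 2 * j).choose m * 4 ^ m) := by
      intro m hm
      simp only [mem_range] at hm
      have hjm : j + m ≤ n := by omega
      by_cases hm2 : m ≤ n - 2 * j
      · have e1 : n.choose (j + m) * (j + m).choose j = n.choose j * (n - j).choose m := by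
          rw [Nat.choose_mul (n := n) (by omega)]
          congr 1
          congr 1
          omega
        have hmj : m + j ≤ n - j := by omega
        have e2 : (n - j).choose m * ((n - j) - m).choose j
            = (n - j).choose j * ((n - j) - j).choose m := by
          have A := Nat.choose_mul (n := n - j) (show m ≤ m + j by omega)
          have B := Nat.choose_mul (n := n - j) (show j ≤ m + j by omega)
          have hs : (m + j).choose m = (m + j).choose j := by
            rw [← Nat.choose_symm (show m ≤ m + j by omega)]
            congr 1
            omega
          rw [hs] at A
          have hA : (m + j) - m = j := by omega
          have hB : (m + j) - j = m := by omega
          rw [hA] at A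
          rw [hB] at B
          rw [← A, B]
        have e3 : n - (j + m) = (n - j) - m := by omega
        have e4 : (n - j) - j = n - 2 * j := by omega
        calc n.choose (j + m) * ((j + m).choose j * (n - (j + m)).choose j) * 4 ^ (j + m)
            = (n.choose (j + m) * (j + m).choose j) * ((n - j) - m).choose j * 4 ^ (j + m) := by
              rw [e3]; ring
          _ = n.choose j * ((n - j).choose m * ((n - j) - m).choose j) * 4 ^ (j + m) := by
              rw [e1]; ring
          _ = n.choose j * ((n - j).choose j * (n - 2 * j).choose m) * 4 ^ (j + m) := by
              rw [e2, e4]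
          _ = n.choose j * (n - j).choose j * 4 ^ j * ((n - 2 * j).choose m * 4 ^ m) := by
              rw [pow_add]; ring
      · rw [Nat.choose_eq_zero_of_lt (show n - (j + m) < j by omega),
          Nat.choose_eq_zero_of_lt (show n - 2 * j < m by omega)]
        ring
    rw [Finset.sum_congr rfl step2, ← Finset.mul_sum]
    have step3 : ∑ m ∈ range (n + 1 - j), (n - 2 * j).choose m * 4 ^ m
        = ∑ m ∈ range (n - 2 * j + 1), (n - 2 * j).choose m * 4 ^ m := by
      symm
      apply Finset.sum_subset
      · intro x hx; simp only [mem_range] at *; omega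
      · intro x hx hnx
        simp only [mem_range] at hx hnx
        rw [Nat.choose_eq_zero_of_lt (by omega), zero_mul]
    have step4 : ∑ m ∈ range (n - 2 * j + 1), (n - 2 * j).choose m * 4 ^ m
        = 5 ^ (n - 2 * j) := by
      have := add_pow 4 1 (n - 2 * j) (R := ℕ)
      norm_num at this
      rw [this]
      apply Finset.sum_congr rfl
      intro i _
      ring
    rw [step3, step4]
    have e5 : n.choose (2 * j) * (2 * j).choose j = n.choose j * (n - j).choose j := by
      rw [Nat.choose_mul (n := n) (by omega)]
      congr 1
      congr 1
      omega
    rw [e5]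
  · rw [Nat.choose_eq_zero_of_lt (show n < 2 * j by omega)]
    simp only [zero_mul]
    apply Finset.sum_eq_zero
    intro k hk
    simp only [mem_range] at hk
    by_cases hkj : k < j
    · rw [Nat.choose_eq_zero_of_lt hkj]; ring
    · rw [Nat.choose_eq_zero_of_lt (show n - k < j by omega)]; ring

theorem hanna_sum_four_eq_five (n : ℕ) :
    ∑ k ∈ range (n + 1), (n.choose k) ^ 2 * 4 ^ k
      = ∑ k ∈ range (n / 2 + 1), n.choose (2 * k) * (2 * k).choose k * 4 ^ k * 5 ^ (n - 2 * k) := by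
  have step1 : ∑ k ∈ range (n + 1), (n.choose k) ^ 2 * 4 ^ k
      = ∑ k ∈ range (n + 1), ∑ j ∈ range (n + 1),
          n.choose k * (k.choose j * (n - k).choose j) * 4 ^ k := by
    apply Finset.sum_congr rfl
    intro k hk
    simp only [mem_range] at hk
    rw [← Finset.sum_mul, ← Finset.mul_sum, vander n k (by omega)]
    ring
  rw [step1, Finset.sum_comm]
  have step2 : ∑ j ∈ range (n + 1), ∑ k ∈ range (n + 1),
      n.choose k * (k.choose j * (n - k).choose j) * 4 ^ k
      = ∑ j ∈ range (n + 1), n.choose (2 * j) * (2 * j).choose j * 4 ^ j * 5 ^ (n - 2 * j) :=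
    Finset.sum_congr rfl fun j _ => key n j
  rw [step2]
  symm
  apply Finset.sum_subset
  · intro x hx; simp only [mem_range] at *; omega
  · intro x hx hnx
    simp only [mem_range] at hx hnx
    rw [Nat.choose_eq_zero_of_lt (show n < 2 * x by omega)]
    ring
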